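/- Let m ≥ 2 be a natural number. Every homoclinic solution u of ü − u + u^m = 0 is symmetric about a point z₀ at which u̇(z₀) = 0 and ü(z₀) = u(z₀) − u(z₀)^m ≠ 0; in other words, the homoclinic orbit intersects the symmetric section {(u, u̇) ∈ ℝ² : u̇ = 0} transversally (the vector field at the intersection point is not tangent to the section). -/

import Mathlib

open Filter Topology Set

/-- A homoclinic solution of the travelling-wave generalised KdV equation
`ü − u + u^m = 0`: a nonconstant `C²` solution with `u, u̇ → 0` as `z → ±∞`. -/
def IsHomoclinicKdV (m : ℕ) (u : ℝ → ℝ) : Prop :=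
  ContDiff ℝ 2 u ∧
  (∀ z : ℝ, deriv (deriv u) z - u z + (u z) ^ m = 0) ∧
  (∃ z w : ℝ, u z ≠ u w) ∧
  Tendsto u atTop (𝓝 0) ∧ Tendsto u atBot (𝓝 0) ∧
  Tendsto (deriv u) atTop (𝓝 0) ∧ Tendsto (deriv u) atBot (𝓝 0)

open Metric Bornology

/-- A `C¹` map between finite-dimensional spaces is Lipschitz on closed balls. -/
private lemma aux_lipschitzOnWith_closedBall {E F : Type*} [NormedAddCommGroup E]
    [NormedSpace ℝ E] [NormedAddCommGroup F] [NormedSpace ℝ F] [FiniteDimensional ℝ E]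
    {f : E → F} (hf : ContDiff ℝ 1 f) (R : ℝ) :
    ∃ K : NNReal, LipschitzOnWith K f (closedBall (0:E) R) := by
  obtain ⟨C, hC⟩ := (isCompact_closedBall (0:E) R).exists_bound_of_continuousOn
    ((hf.continuous_fderiv one_ne_zero).continuousOn)
  refine ⟨⟨max C 0, le_max_right _ _⟩, ?_⟩
  apply (convex_closedBall _ _).lipschitzOnWith_of_nnnorm_hasFDerivWithin_le
    (fun x hx => ((hf.differentiable one_ne_zero x).hasFDerivAt).hasFDerivWithinAt)
  intro x hx
  change ‖fderiv ℝ f x‖ ≤ max C 0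
  exact le_trans (hC x hx) (le_max_left _ _)

/-- A continuous function tending to `0` at `±∞` and positive somewhere attains a
positive global maximum. -/
private lemma aux_exists_global_max (u : ℝ → ℝ) (hc : Continuous u)
    (hT : Tendsto u atTop (𝓝 0)) (hB : Tendsto u atBot (𝓝 0))
    {z₁ : ℝ} (hpos : 0 < u z₁) :
    ∃ z₀ : ℝ, (∀ z, u z ≤ u z₀) ∧ 0 < u z₀ := by
  obtain ⟨A, hA⟩ := (hT.eventually_lt_const hpos).exists_forall_of_atTop
  obtain ⟨B, hB'⟩ := (hB.eventually_lt_const hpos).exists_forall_of_atBot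
  have hz₁A : z₁ ≤ A := by
    by_contra h
    exact absurd (hA z₁ (le_of_lt (not_le.mp h))) (lt_irrefl _)
  have hBz₁ : B ≤ z₁ := by
    by_contra h
    exact absurd (hB' z₁ (le_of_lt (not_le.mp h))) (lt_irrefl _)
  obtain ⟨z₀, hz₀mem, hmax⟩ := isCompact_Icc.exists_isMaxOn ⟨z₁, hBz₁, hz₁A⟩
    hc.continuousOn
  have hz₁le : u z₁ ≤ u z₀ := hmax ⟨hBz₁, hz₁A⟩
  refine ⟨z₀, fun z => ?_, lt_of_lt_of_le hpos hz₁le⟩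
  by_cases hz : z ∈ Icc B A
  · exact hmax hz
  · rcases not_and_or.mp hz with h | h
    · exact le_trans (le_of_lt (lt_of_lt_of_le (hB' z (le_of_lt (not_le.mp h))) hz₁le)) le_rfl
    · exact le_trans (le_of_lt (lt_of_lt_of_le (hA z (le_of_lt (not_le.mp h))) hz₁le)) le_rfl

set_option maxHeartbeats 1000000 in
theorem kdv_homoclinic_transverse' (m : ℕ) (hm : 2 ≤ m)
    (u : ℝ → ℝ)
    (hC2 : ContDiff ℝ 2 u)
    (hode : ∀ z : ℝ, deriv (deriv u) z - u z + (u z) ^ m = 0)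
    (hne : ∃ z w : ℝ, u z ≠ u w)
    (hT : Tendsto u atTop (𝓝 0)) (hB : Tendsto u atBot (𝓝 0))
    (hT' : Tendsto (deriv u) atTop (𝓝 0)) (hB' : Tendsto (deriv u) atBot (𝓝 0)) :
    ∃ z₀ : ℝ,
      (∀ z : ℝ, u (z₀ + z) = u (z₀ - z)) ∧
      deriv u z₀ = 0 ∧
      u z₀ - (u z₀) ^ m ≠ 0 := by
  -- basic differentiability facts
  have h2 : ContDiff ℝ ((1 : WithTop ℕ∞) + 1) u := by exact hC2
  have hsucc := contDiff_succ_iff_deriv.mp h2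
  have hud : Differentiable ℝ u := hsucc.1
  have hC1d : ContDiff ℝ 1 (deriv u) := hsucc.2.2
  have hud' : Differentiable ℝ (deriv u) := hC1d.differentiable one_ne_zero
  have hode' : ∀ z, deriv (deriv u) z = u z - (u z) ^ m := fun z => by linarith [hode z]
  -- scaled energy
  set En : ℝ → ℝ := fun z =>
    ((m : ℝ) + 1) * (deriv u z) ^ 2 - ((m : ℝ) + 1) * (u z) ^ 2 + 2 * (u z) ^ (m + 1) with hEn
  have hE : ∀ z, HasDerivAt En 0 z := by
    intro z
    have h1 : HasDerivAt u (deriv u z) z := (hud z).hasDerivAt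
    have h2' : HasDerivAt (deriv u) (deriv (deriv u) z) z := (hud' z).hasDerivAt
    have := (((h2'.pow 2).const_mul ((m : ℝ) + 1)).sub
        ((h1.pow 2).const_mul ((m : ℝ) + 1))).add ((h1.pow (m + 1)).const_mul 2)
    convert this using 1
    · rfl
    · rfl
    · rfl
    rw [hode' z]
    push_cast
    ring
  have hEconst : ∀ z, En z = En 0 := fun z =>
    is_const_of_deriv_eq_zero (fun w => (hE w).differentiableAt) (fun w => (hE w).deriv) z 0
  -- the energy is zero
  have hE0 : ∀ z, En z = 0 := by
    have h1 := (((hT'.pow 2).const_mul ((m:ℝ)+1)).sub ((hT.pow 2).const_mul ((m:ℝ)+1))).add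
      ((hT.pow (m+1)).const_mul 2)
    have h0 : ((m : ℝ) + 1) * (0:ℝ) ^ 2 - ((m : ℝ) + 1) * (0:ℝ) ^ 2 + 2 * (0:ℝ) ^ (m + 1) = 0 := by
      rw [zero_pow (Nat.succ_ne_zero m)]; ring
    rw [h0] at h1
    have h2'' : Tendsto En atTop (𝓝 (En 0)) := by
      have hc : En = fun _ => En 0 := funext hEconst
      rw [hc]; exact tendsto_const_nhds
    intro z
    rw [hEconst z, tendsto_nhds_unique h2'' h1]
  -- find a critical point z₀ with u z₀ ≠ 0
  obtain ⟨z₀, hd0, hu0⟩ : ∃ z₀, deriv u z₀ = 0 ∧ u z₀ ≠ 0 := by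
    obtain ⟨a, b, hab⟩ := hne
    have hz₁ : ∃ z₁, u z₁ ≠ 0 := by
      by_cases h : u a = 0
      · exact ⟨b, fun hb => hab (by rw [h, hb])⟩
      · exact ⟨a, h⟩
    obtain ⟨z₁, hz₁⟩ := hz₁
    rcases hz₁.lt_or_gt with hneg | hpos
    · obtain ⟨z₀, hmax, hpos'⟩ := aux_exists_global_max (fun z => -u z)
        (hud.continuous.neg)
        (by simpa using hT.neg) (by simpa using hB.neg) (by simpa using hneg)
      have hmin : ∀ z, u z₀ ≤ u z := fun z => by have := hmax z; simpa using this
      have hloc : IsLocalMin u z₀ := Filter.Eventually.of_forall hmin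
      exact ⟨z₀, hloc.deriv_eq_zero, by intro h; rw [h] at hpos'; simp at hpos'⟩
    · obtain ⟨z₀, hmax, hpos'⟩ := aux_exists_global_max u hud.continuous hT hB hpos
      have hloc : IsLocalMax u z₀ := Filter.Eventually.of_forall hmax
      exact ⟨z₀, hloc.deriv_eq_zero, ne_of_gt hpos'⟩
  refine ⟨z₀, ?_, hd0, ?_⟩
  · -- symmetry via ODE uniqueness
    -- the vector field
    set v : ℝ → ℝ × ℝ → ℝ × ℝ := fun _ p => (p.2, p.1 - p.1 ^ m) with hv
    have hvC : ContDiff ℝ 1 (fun p : ℝ × ℝ => (p.2, p.1 - p.1 ^ m)) :=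
      contDiff_snd.prodMk (contDiff_fst.sub (contDiff_fst.pow m))
    -- boundedness of the orbit
    have hφc : Continuous fun z => (u z, deriv u z) :=
      hud.continuous.prodMk hC1d.continuous
    have hφt : Tendsto (fun z => (u z, deriv u z)) (cocompact ℝ) (𝓝 (0, 0)) := by
      rw [cocompact_eq_atBot_atTop, tendsto_sup]
      exact ⟨hB.prodMk_nhds hB', hT.prodMk_nhds hT'⟩
    have hcpt := hφt.isCompact_insert_range_of_cocompact hφc
    obtain ⟨R, hR⟩ := hcpt.isBounded.subset_closedBall (0 : ℝ × ℝ)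
    have hmem : ∀ z, (u z, deriv u z) ∈ closedBall (0 : ℝ × ℝ) R :=
      fun z => hR (mem_insert_of_mem _ ⟨z, rfl⟩)
    have hmem' : ∀ z, (u z, -(deriv u z)) ∈ closedBall (0 : ℝ × ℝ) R := by
      intro z
      have h1 := hmem z
      rw [mem_closedBall, dist_zero_right] at h1 ⊢
      simpa [Prod.norm_def] using h1
    obtain ⟨K, hK⟩ := aux_lipschitzOnWith_closedBall hvC R
    -- the two solutions
    set F : ℝ → ℝ × ℝ := fun t => (u (z₀ + t), deriv u (z₀ + t)) with hF
    set G : ℝ → ℝ × ℝ := fun t => (u (z₀ - t), -(deriv u (z₀ - t))) with hG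
    have hFd : ∀ t, HasDerivAt F (v t (F t)) t := by
      intro t
      have ht1 : HasDerivAt (fun t : ℝ => z₀ + t) 1 t := (hasDerivAt_id t).const_add z₀
      have h1 : HasDerivAt (fun t => u (z₀ + t)) (deriv u (z₀ + t) * 1) t :=
        (hud (z₀ + t)).hasDerivAt.comp t ht1
      have h2' : HasDerivAt (fun t => deriv u (z₀ + t)) (deriv (deriv u) (z₀ + t) * 1) t :=
        (hud' (z₀ + t)).hasDerivAt.comp t ht1
      have := h1.prodMk h2'
      convert this using 1
      simp [hv, hF, hode' (z₀ + t)]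
    have hGd : ∀ t, HasDerivAt G (v t (G t)) t := by
      intro t
      have ht1 : HasDerivAt (fun t : ℝ => z₀ - t) (-1) t := (hasDerivAt_id t).const_sub z₀
      have h1 : HasDerivAt (fun t => u (z₀ - t)) (deriv u (z₀ - t) * (-1)) t :=
        (hud (z₀ - t)).hasDerivAt.comp t ht1
      have h2' : HasDerivAt (fun t => -(deriv u (z₀ - t)))
          (-(deriv (deriv u) (z₀ - t) * (-1))) t :=
        ((hud' (z₀ - t)).hasDerivAt.comp t ht1).neg
      have := h1.prodMk h2'
      convert this using 1
      simp [hv, hG, hode' (z₀ - t)]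
    have heq0 : F 0 = G 0 := by simp [hF, hG, hd0]
    intro z
    have hzmem : z ∈ Ioo (-(|z| + 1)) (|z| + 1) := by
      constructor <;> cases abs_le.mp (le_refl |z|) <;> nlinarith [abs_nonneg z]
    have h0mem : (0 : ℝ) ∈ Ioo (-(|z| + 1)) (|z| + 1) := by
      constructor <;> nlinarith [abs_nonneg z]
    have hEq := ODE_solution_unique_of_mem_Ioo (fun _ _ => hK) h0mem
      (fun t _ => ⟨hFd t, hmem (z₀ + t)⟩) (fun t _ => ⟨hGd t, hmem' (z₀ - t)⟩) heq0
    have := hEq hzmem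
    exact congrArg Prod.fst this
  · -- transversality from the energy relation
    intro h
    have hpow : (u z₀) ^ m = u z₀ := by linarith
    have hE0' := hE0 z₀
    simp only [hEn] at hE0'
    rw [hd0] at hE0'
    have hp1 : (u z₀) ^ (m + 1) = (u z₀) ^ 2 := by
      rw [pow_succ, hpow, sq]
    rw [hp1] at hE0'
    have hm2 : (2 : ℝ) ≤ (m : ℝ) := by exact_mod_cast hm
    have hsq : (u z₀) ^ 2 ≠ 0 := pow_ne_zero _ hu0
    nlinarith [sq_nonneg (u z₀), sq_abs (u z₀), abs_pos.mpr hu0]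

/-- Every homoclinic solution of `ü − u + u^m = 0` (`m ≥ 2`) is symmetric about a
point `z₀` at which `u̇(z₀) = 0` and `ü(z₀) = u(z₀) − u(z₀)^m ≠ 0`; i.e. the
homoclinic orbit intersects the symmetric section `{u̇ = 0}` transversally. -/
theorem kdv_homoclinic_transverse (m : ℕ) (hm : 2 ≤ m)
    (u : ℝ → ℝ) (hu : IsHomoclinicKdV m u) :
    ∃ z₀ : ℝ,
      (∀ z : ℝ, u (z₀ + z) = u (z₀ - z)) ∧
      deriv u z₀ = 0 ∧
      u z₀ - (u z₀) ^ m ≠ 0 := by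
  obtain ⟨hC2, hode, hne, hT, hB, hT', hB'⟩ := hu
  exact kdv_homoclinic_transverse' m hm u hC2 hode hne hT hB hT' hB'
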